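/- Let A = ⊕_{d∈ℤ} A_d be a ℤ-graded commutative ring and V = ⊕_{d∈ℤ} V_d a ℤ-graded A-module. Let k be a field, p: A → k a ring homomorphism vanishing on A_d for all d < 0, and p*: V → k a map that is A-linear with respect to p. Define the 'specialized' pair p₀: A → k and p₀*: V → k by p₀ = p on A₀, p₀ = 0 on A_d for d ≠ 0, and (with r := min{ d : p*|_{V_d} ≠ 0 }, assumed to exist) p₀* = p* on V_r and p₀* = 0 on V_d for d ≠ r. Then p₀ is a ring homomorphism and p₀* is A-linear with respect to p₀. -/

import Mathlib

/-- Let `A = ⊕_d A_d` be a ℤ-graded commutative ring, `V = ⊕_d V_d` a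
ℤ-graded `A`-module, `p : A → k` a ring homomorphism into a field vanishing on `A_d`
for `d < 0`, and `p* : V → k` additive and `A`-linear with respect to `p`.  Let `r` be
the least degree with `p*` nonzero on `V_r` (assumed to exist).  Then the specialized
pair `p₀ := p ∘ (projection onto A₀)` and `p₀* := p* ∘ (projection onto V_r)` satisfy:
`p₀` is a ring homomorphism and `p₀*` is additive and `A`-linear with respect to
`p₀`. -/
theorem stmt_16 {A V k : Type*} [CommRing A] [AddCommGroup V] [Module A V] [Field k]
    (𝒜 : ℤ → AddSubgroup A) [GradedRing 𝒜]
    (𝒱 : ℤ → AddSubgroup V) [DirectSum.Decomposition 𝒱]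
    (hsmul : ∀ (d e : ℤ) (a : A) (v : V), a ∈ 𝒜 d → v ∈ 𝒱 e → a • v ∈ 𝒱 (d + e))
    (p : A →+* k) (pstar : V → k)
    (hadd : ∀ v w : V, pstar (v + w) = pstar v + pstar w)
    (hlin : ∀ (a : A) (v : V), pstar (a • v) = p a * pstar v)
    (hneg : ∀ d < (0 : ℤ), ∀ a ∈ 𝒜 d, p a = 0)
    (r : ℤ) (hr : IsLeast {d : ℤ | ∃ v ∈ 𝒱 d, pstar v ≠ 0} r) :
    (∀ a b : A, p (GradedRing.proj 𝒜 0 (a * b))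
        = p (GradedRing.proj 𝒜 0 a) * p (GradedRing.proj 𝒜 0 b)) ∧
    p (GradedRing.proj 𝒜 0 1) = 1 ∧
    (∀ a b : A, p (GradedRing.proj 𝒜 0 (a + b))
        = p (GradedRing.proj 𝒜 0 a) + p (GradedRing.proj 𝒜 0 b)) ∧
    (∀ v w : V, pstar ((DirectSum.decompose 𝒱 (v + w) r : 𝒱 r) : V)
        = pstar ((DirectSum.decompose 𝒱 v r : 𝒱 r) : V)
          + pstar ((DirectSum.decompose 𝒱 w r : 𝒱 r) : V)) ∧
    (∀ (a : A) (v : V), pstar ((DirectSum.decompose 𝒱 (a • v) r : 𝒱 r) : V)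
        = p (GradedRing.proj 𝒜 0 a) * pstar ((DirectSum.decompose 𝒱 v r : 𝒱 r) : V)) := by

  classical
  have hp0 : pstar 0 = 0 := by
    have h := hadd 0 0
    rw [add_zero] at h
    exact (left_eq_add.mp h)
  have hlow : ∀ e < r, ∀ v ∈ 𝒱 e, pstar v = 0 := by
    intro e he v hv
    by_contra h
    exact absurd (hr.2 ⟨v, hv, h⟩) (not_le.mpr he)
  set P : A → k := fun a => p (GradedRing.proj 𝒜 0 a) with hP
  set Q : V → k := fun v => pstar ((DirectSum.decompose 𝒱 v r : 𝒱 r) : V) with hQ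
  have hPadd : ∀ a b : A, P (a + b) = P a + P b := by
    intro a b; simp [hP, map_add]
  have hPhom : ∀ (d : ℤ) (a : A), a ∈ 𝒜 d → P a = if d = 0 then p a else 0 := by
    intro d a ha
    by_cases h : d = 0
    · subst h
      simp [hP, GradedRing.proj_apply, DirectSum.decompose_of_mem_same 𝒜 ha]
    · simp [hP, GradedRing.proj_apply, DirectSum.decompose_of_mem_ne 𝒜 ha h, h]
  have hQhom : ∀ (e : ℤ) (v : V), v ∈ 𝒱 e → Q v = if e = r then pstar v else 0 := by
    intro e v hv
    by_cases h : e = r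
    · subst h
      simp [hQ, DirectSum.decompose_of_mem_same 𝒱 hv]
    · simp [hQ, DirectSum.decompose_of_mem_ne 𝒱 hv h, h, hp0]
  have hQadd : ∀ v w : V, Q (v + w) = Q v + Q w := by
    intro v w
    simp only [hQ, DirectSum.decompose_add, DirectSum.add_apply, AddSubgroup.coe_add]
    exact hadd _ _
  have hP0 : P 0 = 0 := by simp [hP]
  have hQ0 : Q 0 = 0 := by simp [hQ, hp0]
  have hmul : ∀ a b : A, P (a * b) = P a * P b := by
    refine DirectSum.Decomposition.inductionOn 𝒜 ?_ ?_ ?_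
    · intro b; simp [hP0, zero_mul]
    · intro i a
      refine DirectSum.Decomposition.inductionOn 𝒜 ?_ ?_ ?_
      · simp [hP0, mul_zero]
      · intro j b
        have hab : (a : A) * (b : A) ∈ 𝒜 (i + j) := SetLike.mul_mem_graded a.2 b.2
        rw [hPhom _ _ hab, hPhom _ _ a.2, hPhom _ _ b.2]
        by_cases hi : i = 0 <;> by_cases hj : j = 0
        · subst hi; subst hj; simp [map_mul]
        · simp [hi, hj]
        · simp [hi, hj]
        · by_cases hij : i + j = 0
          · rcases lt_trichotomy i 0 with h | h | h
            · simp [hij, hi, hj, map_mul, hneg i h a a.2]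
            · exact absurd h hi
            · have hj' : j < 0 := by omega
              simp [hij, hi, hj, map_mul, hneg j hj' b b.2]
          · simp [hij, hi, hj]
      · intro b c hb hc
        rw [mul_add, hPadd, hb, hc, hPadd, mul_add]
    · intro a a' ha ha' b
      rw [add_mul, hPadd, ha b, ha' b, hPadd, add_mul]
  have hone : P 1 = 1 := by
    have h1 : (1 : A) ∈ 𝒜 0 := SetLike.one_mem_graded 𝒜
    rw [hPhom 0 1 h1]
    simp
  have hsm : ∀ (a : A) (v : V), Q (a • v) = P a * Q v := by
    refine DirectSum.Decomposition.inductionOn 𝒜 ?_ ?_ ?_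
    · intro v; simp [hP0, hQ0, zero_smul]
    · intro d a
      refine DirectSum.Decomposition.inductionOn 𝒱 ?_ ?_ ?_
      · simp [hQ0, smul_zero]
      · intro e v
        have hav : (a : A) • (v : V) ∈ 𝒱 (d + e) := hsmul d e a v a.2 v.2
        rw [hQhom _ _ hav, hQhom _ _ v.2, hPhom _ _ a.2]
        by_cases hd : d = 0 <;> by_cases he : e = r
        · subst hd; subst he; simp [hlin]
        · simp [hd, he]
        · simp [hd, he]
        · by_cases hde : d + e = r
          · rcases lt_trichotomy d 0 with h | h | h
            · simp [hde, hd, he, hlin, hneg d h a a.2]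
            · exact absurd h hd
            · have he' : e < r := by omega
              simp [hde, hd, he, hlin, hlow e he' v v.2]
          · simp [hde, hd, he]
      · intro v w hv hw
        rw [smul_add, hQadd, hv, hw, hQadd, mul_add]
    · intro a a' ha ha' v
      rw [add_smul, hQadd, ha v, ha' v, hPadd, add_mul]
  exact ⟨hmul, hone, hPadd, hQadd, hsm⟩
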